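/- Let t be a rational number with t ∉ {0, ±1}, and let u = 2t/(t²-1). Then the point P = (2u/(t+1)², 4t(t²+2t-1)(t²+1)/((t+1)⁵(t-1)³)) lies on the elliptic curve E: y² = x(x+1)(x+u⁴) and has order exactly 8 in E(ℚ). -/

import Mathlib

open WeierstrassCurve.Affine

private lemma some_congr' {F : Type*} [Field F] {W : WeierstrassCurve.Affine F}
    {x₁ y₁ x₂ y₂ : F} (h₁ : W.Nonsingular x₁ y₁) (h₂ : W.Nonsingular x₂ y₂)
    (hx : x₁ = x₂) (hy : y₁ = y₂) : Point.some _ _ h₁ = Point.some _ _ h₂ := by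
  subst hx; subst hy; rfl

set_option maxHeartbeats 2000000 in
theorem stmt_0 (t : ℚ) (ht0 : t ≠ 0) (ht1 : t ≠ 1) (htm1 : t ≠ -1)
    (u : ℚ) (hu : u = 2 * t / (t ^ 2 - 1))
    (W : WeierstrassCurve.Affine ℚ)
    (hW : W = { a₁ := 0, a₂ := 1 + u ^ 4, a₃ := 0, a₄ := u ^ 4, a₆ := 0 }) :
    ∃ h : W.Nonsingular (2 * u / (t + 1) ^ 2)
        (4 * t * (t ^ 2 + 2 * t - 1) * (t ^ 2 + 1) / ((t + 1) ^ 5 * (t - 1) ^ 3)),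
      addOrderOf (WeierstrassCurve.Affine.Point.some _ _ h) = 8 := by
  subst hu hW
  have hp : t + 1 ≠ 0 := fun h => htm1 (by linarith)
  have hm : t - 1 ≠ 0 := fun h => ht1 (by linarith)
  have hs : t ^ 2 - 1 ≠ 0 := by
    intro h
    rcases mul_eq_zero.mp (show (t - 1) * (t + 1) = 0 by linear_combination h) with h' | h'
    · exact hm h'
    · exact hp h'
  have hq : t ^ 2 + 1 ≠ 0 := by positivity
  have hr : t ^ 2 + 2 * t - 1 ≠ 0 := by
    intro h
    have h2 : ((t + 1 : ℚ) : ℝ) ^ 2 = 2 := by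
      exact_mod_cast (show (t + 1 : ℚ) ^ 2 = 2 by linear_combination h)
    have hsq : ((|t + 1| : ℚ) : ℝ) = Real.sqrt 2 := by
      rw [← h2, Real.sqrt_sq_eq_abs]
      exact (Rat.cast_abs _)
    exact irrational_sqrt_two ⟨|t + 1|, hsq⟩
  set x₁ : ℚ := 2 * (2 * t / (t ^ 2 - 1)) / (t + 1) ^ 2 with hx₁
  set y₁ : ℚ := 4 * t * (t ^ 2 + 2 * t - 1) * (t ^ 2 + 1) / ((t + 1) ^ 5 * (t - 1) ^ 3) with hy₁
  set x₂ : ℚ := 4 * t ^ 2 / (t ^ 2 - 1) ^ 2 with hx₂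
  set y₂ : ℚ := -(4 * t ^ 2 * (t ^ 2 + 1) ^ 2) / (t ^ 2 - 1) ^ 4 with hy₂
  set W : WeierstrassCurve.Affine ℚ :=
    { a₁ := 0, a₂ := 1 + (2 * t / (t ^ 2 - 1)) ^ 4, a₃ := 0,
      a₄ := (2 * t / (t ^ 2 - 1)) ^ 4, a₆ := 0 } with hWdef
  have ha1 : W.a₁ = 0 := rfl
  have ha2 : W.a₂ = 1 + (2 * t / (t ^ 2 - 1)) ^ 4 := rfl
  have ha3 : W.a₃ = 0 := rfl
  have ha4 : W.a₄ = (2 * t / (t ^ 2 - 1)) ^ 4 := rfl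
  have ha6 : W.a₆ = 0 := rfl
  have hy1ne : y₁ ≠ 0 := by
    rw [hy₁]
    exact div_ne_zero (mul_ne_zero (mul_ne_zero (mul_ne_zero (by norm_num) ht0) hr) hq)
      (mul_ne_zero (pow_ne_zero 5 hp) (pow_ne_zero 3 hm))
  have hy2ne : y₂ ≠ 0 := by
    rw [hy₂]
    exact div_ne_zero (neg_ne_zero.mpr (mul_ne_zero (mul_ne_zero (by norm_num) (pow_ne_zero 2 ht0)) (pow_ne_zero 2 hq))) (pow_ne_zero 4 hs)
  have h1 : W.Nonsingular x₁ y₁ := by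
    rw [nonsingular_iff, equation_iff, ha1, ha2, ha3, ha4, ha6]
    constructor
    · rw [hx₁, hy₁]; field_simp; ring
    · right
      intro h
      exact hy1ne (by linarith)
  have h2 : W.Nonsingular x₂ y₂ := by
    rw [nonsingular_iff, equation_iff, ha1, ha2, ha3, ha4, ha6]
    constructor
    · rw [hx₂, hy₂]; field_simp; ring
    · right
      intro h
      exact hy2ne (by linarith)
  have h3 : W.Nonsingular 0 0 := by
    rw [nonsingular_zero]
    refine ⟨ha6, Or.inr ?_⟩
    rw [ha4]
    exact pow_ne_zero 4 (div_ne_zero (mul_ne_zero (by norm_num) ht0) hs)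
  have hne1 : y₁ ≠ W.negY x₁ y₁ := by
    simp only [negY]
    intro h
    exact hy1ne (by linarith)
  have hne2 : y₂ ≠ W.negY x₂ y₂ := by
    simp only [negY]
    intro h
    exact hy2ne (by linarith)
  have hsl1 : W.slope x₁ x₁ y₁ y₁ = (t ^ 4 + 4 * t - 1) / (t ^ 2 - 1) ^ 2 := by
    rw [slope_of_Y_ne rfl hne1, div_eq_div_iff (sub_ne_zero.mpr hne1) (pow_ne_zero 2 hs)]
    simp only [negY, ha1, ha2, ha3, ha4]
    rw [hx₁, hy₁]
    field_simp
    ring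
  have hsl2 : W.slope x₂ x₂ y₂ y₂ = -((t ^ 2 + 1) ^ 2) / (t ^ 2 - 1) ^ 2 := by
    rw [slope_of_Y_ne rfl hne2, div_eq_div_iff (sub_ne_zero.mpr hne2) (pow_ne_zero 2 hs)]
    simp only [negY, ha1, ha2, ha3, ha4]
    rw [hx₂, hy₂]
    field_simp
    ring
  have e2 : Point.some _ _ h1 + Point.some _ _ h1 = Point.some _ _ h2 := by
    rw [Point.add_self_of_Y_ne hne1]
    refine some_congr' _ _ ?_ ?_
    · simp only [addX, ha1, ha2, ha3, ha4]
      rw [hsl1, hx₁, hx₂]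
      field_simp
      ring
    · simp only [addY, negAddY, addX, negY, ha1, ha2, ha3, ha4]
      rw [hsl1, hx₁, hy₁, hy₂]
      field_simp
      ring
  have e4 : Point.some _ _ h2 + Point.some _ _ h2 = Point.some _ _ h3 := by
    rw [Point.add_self_of_Y_ne hne2]
    refine some_congr' _ _ ?_ ?_
    · simp only [addX, ha1, ha2, ha3, ha4]
      rw [hsl2, hx₂]
      field_simp
      ring
    · simp only [addY, negAddY, addX, negY, ha1, ha2, ha3, ha4]
      rw [hsl2, hx₂, hy₂]
      field_simp
      ring
  have e8 : Point.some _ _ h3 + Point.some _ _ h3 = 0 := by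
    apply Point.add_self_of_Y_eq
    simp only [negY]
    ring
  refine ⟨h1, ?_⟩
  set P : W.Point := Point.some _ _ h1 with hP
  have h2P : 2 • P = Point.some _ _ h2 := by rw [two_nsmul]; exact e2
  have h4P : 4 • P = Point.some _ _ h3 := by
    rw [show (4 : ℕ) = 2 * 2 from rfl, mul_nsmul, h2P, two_nsmul]
    exact e4
  have h8P : 8 • P = 0 := by
    rw [show (8 : ℕ) = 4 * 2 from rfl, mul_nsmul, h4P, two_nsmul]
    exact e8
  have hdvd : addOrderOf P ∣ 8 := addOrderOf_dvd_of_nsmul_eq_zero h8P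
  have hn4 : ¬ addOrderOf P ∣ 4 := by
    intro h
    have : 4 • P = 0 := addOrderOf_dvd_iff_nsmul_eq_zero.mp h
    rw [h4P] at this
    exact Point.some_ne_zero h3 this
  have hle : addOrderOf P ≤ 8 := Nat.le_of_dvd (by norm_num) hdvd
  interval_cases h : addOrderOf P <;> revert hdvd hn4 <;> decide
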